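/- Let (M, Δ, α) be a partial dynamical system, Y ⊂ M a closed set containing M \ α(Δ), and let M̃ = ⋃_{N∈ℕ} M_N ∪ M_∞ ⊂ ∏_ℕ (M ⊔ {0}) be the natural reversible extension associated with Y, where M_N = {(x₀,…,x_N,0,0,…) : x_n ∈ Δ, α(x_n) = x_{n-1} for 1 ≤ n ≤ N, x_N ∈ Y} and M_∞ = {(x₀,x₁,…) : x_n ∈ Δ, α(x_n) = x_{n-1} for all n ≥ 1}. Then the map α̃(x₀,x₁,…) = (α(x₀),x₀,x₁,…), defined on Δ̃ = {x ∈ M̃ : x₀ ∈ Δ}, is a homeomorphism of Δ̃ onto {x ∈ M̃ : x₁ ≠ 0}, with inverse (x₀,x₁,…) ↦ (x₁,x₂,…). -/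

import Mathlib

/-- let `(M, Δ, α)` be a partial dynamical system and `Y ⊇ M \ α(Δ)` closed.
Encode `M ⊔ {0}` as `M ⊕ Unit` (with `Sum.inr ()` playing the role of `0`) and let
`M̃ ⊆ (M ⊕ Unit)^ℕ` be the natural reversible extension associated with `Y`: sequences whose
nonzero entries `x₀,…,x_N` (or all entries, `N = ∞`) satisfy `x_n ∈ Δ`, `α(x_n) = x_{n-1}`
for `n ≥ 1`, and `x_N ∈ Y` when the sequence terminates. Then the map
`α̃(x₀,x₁,…) = (α(x₀),x₀,x₁,…)` is a homeomorphism of `Δ̃ = {x ∈ M̃ : x₀ ∈ Δ}` onto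
`{x ∈ M̃ : x₁ ≠ 0}`, with inverse the shift `(x₀,x₁,…) ↦ (x₁,x₂,…)`. -/
theorem stmt12 {M : Type*} [TopologicalSpace M] [CompactSpace M] [T2Space M]
    (Δ : Set M) (hΔ : IsClopen Δ) (α : M → M) (hα : ContinuousOn α Δ)
    (Y : Set M) (hY : IsClosed Y) (hYc : Set.univ \ (α '' Δ) ⊆ Y)
    (Mt : Set (ℕ → M ⊕ Unit))
    (hMt : Mt = {x | (∀ n y, x (n + 1) = Sum.inl y → y ∈ Δ ∧ x n = Sum.inl (α y)) ∧
                     (∀ n, x n = Sum.inr () → x (n + 1) = Sum.inr ()) ∧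
                     (x 0 ≠ Sum.inr ()) ∧
                     (∀ n y, x n = Sum.inl y → x (n + 1) = Sum.inr () → y ∈ Y)}) :
    ∃ h : {x : ℕ → M ⊕ Unit // x ∈ Mt ∧ ∃ y ∈ Δ, x 0 = Sum.inl y} ≃ₜ
          {x : ℕ → M ⊕ Unit // x ∈ Mt ∧ x 1 ≠ Sum.inr ()},
      (∀ x : {x : ℕ → M ⊕ Unit // x ∈ Mt ∧ ∃ y ∈ Δ, x 0 = Sum.inl y},
        (∀ n, (h x : ℕ → M ⊕ Unit) (n + 1) = (x : ℕ → M ⊕ Unit) n) ∧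
        (∀ y ∈ Δ, (x : ℕ → M ⊕ Unit) 0 = Sum.inl y →
          (h x : ℕ → M ⊕ Unit) 0 = Sum.inl (α y))) ∧
      (∀ x : {x : ℕ → M ⊕ Unit // x ∈ Mt ∧ x 1 ≠ Sum.inr ()},
        ∀ n, (h.symm x : ℕ → M ⊕ Unit) n = (x : ℕ → M ⊕ Unit) (n + 1)) := by
  classical
  subst hMt
  -- raw forward map
  set F : (ℕ → M ⊕ Unit) → (ℕ → M ⊕ Unit) :=
    fun x n => Nat.casesOn n (Sum.map α id (x 0)) x with hF
  set G : (ℕ → M ⊕ Unit) → (ℕ → M ⊕ Unit) := fun x n => x (n + 1) with hG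
  have hF0 : ∀ x, F x 0 = Sum.map α id (x 0) := fun x => rfl
  have hFs : ∀ x n, F x (n + 1) = x n := fun x n => rfl
  -- forward map preserves Mt
  have hFmem : ∀ x : ℕ → M ⊕ Unit,
      (x ∈ {x | (∀ n y, x (n + 1) = Sum.inl y → y ∈ Δ ∧ x n = Sum.inl (α y)) ∧
                     (∀ n, x n = Sum.inr () → x (n + 1) = Sum.inr ()) ∧
                     (x 0 ≠ Sum.inr ()) ∧
                     (∀ n y, x n = Sum.inl y → x (n + 1) = Sum.inr () → y ∈ Y)}) →
      ∀ y ∈ Δ, x 0 = Sum.inl y →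
      (F x ∈ {x | (∀ n y, x (n + 1) = Sum.inl y → y ∈ Δ ∧ x n = Sum.inl (α y)) ∧
                     (∀ n, x n = Sum.inr () → x (n + 1) = Sum.inr ()) ∧
                     (x 0 ≠ Sum.inr ()) ∧
                     (∀ n y, x n = Sum.inl y → x (n + 1) = Sum.inr () → y ∈ Y)}) ∧
      F x 1 ≠ Sum.inr () := by
    rintro x ⟨h1, h2, h3, h4⟩ y hy hx0
    have hF0' : F x 0 = Sum.inl (α y) := by rw [hF0, hx0]; rfl
    refine ⟨⟨?_, ?_, ?_, ?_⟩, ?_⟩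
    · rintro (_ | n) z hz
      · rw [hFs, hx0] at hz
        injection hz with hz
        subst hz
        exact ⟨hy, hF0'⟩
      · rw [hFs] at hz
        obtain ⟨hz1, hz2⟩ := h1 n z hz
        exact ⟨hz1, by rw [hFs, hz2]⟩
    · rintro (_ | _ | n) h
      · rw [hF0'] at h; exact absurd h (by simp)
      · rw [hFs, hx0] at h; exact absurd h (by simp)
      · rw [hFs] at h ⊢
        exact h2 _ h
    · rw [hF0']; simp
    · rintro (_ | n) z hz h
      · rw [hFs, hx0] at h; exact absurd h (by simp)
      · rw [hFs] at hz h
        exact h4 n z hz h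
    · exact fun h => h3 h
  -- backward map preserves Mt
  have hGmem : ∀ x : ℕ → M ⊕ Unit,
      (x ∈ {x | (∀ n y, x (n + 1) = Sum.inl y → y ∈ Δ ∧ x n = Sum.inl (α y)) ∧
                     (∀ n, x n = Sum.inr () → x (n + 1) = Sum.inr ()) ∧
                     (x 0 ≠ Sum.inr ()) ∧
                     (∀ n y, x n = Sum.inl y → x (n + 1) = Sum.inr () → y ∈ Y)}) →
      x 1 ≠ Sum.inr () →
      (G x ∈ {x | (∀ n y, x (n + 1) = Sum.inl y → y ∈ Δ ∧ x n = Sum.inl (α y)) ∧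
                     (∀ n, x n = Sum.inr () → x (n + 1) = Sum.inr ()) ∧
                     (x 0 ≠ Sum.inr ()) ∧
                     (∀ n y, x n = Sum.inl y → x (n + 1) = Sum.inr () → y ∈ Y)}) ∧
      ∃ y ∈ Δ, G x 0 = Sum.inl y := by
    rintro x ⟨h1, h2, h3, h4⟩ hx1
    obtain ⟨z, hz⟩ : ∃ z, x 1 = Sum.inl z := by
      cases hxx : x 1 with
      | inl z => exact ⟨z, rfl⟩
      | inr u => exact absurd (by rw [hxx]) hx1
    obtain ⟨hzΔ, -⟩ := h1 0 z hz
    refine ⟨⟨?_, ?_, ?_, ?_⟩, z, hzΔ, hz⟩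
    · intro n w hw
      exact h1 (n + 1) w hw
    · intro n h
      exact h2 (n + 1) h
    · exact hx1
    · intro n w hw h
      exact h4 (n + 1) w hw h
  -- key identities
  have hGF : ∀ x, G (F x) = x := by
    intro x; funext n; rfl
  have hFG : ∀ x : ℕ → M ⊕ Unit,
      (∀ n y, x (n + 1) = Sum.inl y → y ∈ Δ ∧ x n = Sum.inl (α y)) →
      x 1 ≠ Sum.inr () → F (G x) = x := by
    intro x h1 hx1
    obtain ⟨z, hz⟩ : ∃ z, x 1 = Sum.inl z := by
      cases hxx : x 1 with
      | inl z => exact ⟨z, rfl⟩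
      | inr u => exact absurd (by rw [hxx]) hx1
    obtain ⟨-, hz2⟩ := h1 0 z hz
    funext n
    cases n with
    | zero => show Sum.map α id (x 1) = x 0; rw [hz, hz2]; rfl
    | succ n => rfl
  -- continuity of F on the domain
  have hcontF : Continuous (fun x : {x : ℕ → M ⊕ Unit //
      x ∈ {x | (∀ n y, x (n + 1) = Sum.inl y → y ∈ Δ ∧ x n = Sum.inl (α y)) ∧
                     (∀ n, x n = Sum.inr () → x (n + 1) = Sum.inr ()) ∧
                     (x 0 ≠ Sum.inr ()) ∧
                     (∀ n y, x n = Sum.inl y → x (n + 1) = Sum.inr () → y ∈ Y)} ∧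
      ∃ y ∈ Δ, x 0 = Sum.inl y} => F x.1) := by
    apply continuous_pi
    intro n
    cases n with
    | zero =>
        show Continuous fun x : {x : ℕ → M ⊕ Unit // _} => Sum.map α id (x.1 0)
        have hco : ContinuousOn (Sum.map α id : M ⊕ Unit → M ⊕ Unit)
            (Sum.inl '' Δ) := by
          intro p hp
          obtain ⟨a, ha, rfl⟩ := hp
          have : ContinuousAt (Sum.map α id : M ⊕ Unit → M ⊕ Unit) (Sum.inl a) := by
            refine ((Topology.IsOpenEmbedding.inl (X := M) (Y := Unit)).continuousAt_iff).mp ?_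
            have heq : (Sum.map α id : M ⊕ Unit → M ⊕ Unit) ∘ Sum.inl =
                Sum.inl ∘ α := by funext m; rfl
            rw [heq]
            exact continuous_inl.continuousAt.comp
              (hα.continuousAt (hΔ.isOpen.mem_nhds ha))
          exact this.continuousWithinAt
        apply hco.comp_continuous
        · exact (continuous_apply 0).comp continuous_subtype_val
        · rintro ⟨x, -, y, hy, hx0⟩
          exact ⟨y, hy, hx0.symm⟩
    | succ n =>
        exact (continuous_apply n).comp continuous_subtype_val
  refine ⟨⟨⟨fun x => ⟨F x.1, hFmem x.1 x.2.1 x.2.2.choose x.2.2.choose_spec.1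
        x.2.2.choose_spec.2⟩,
      fun x => ⟨G x.1, hGmem x.1 x.2.1 x.2.2⟩,
      fun x => Subtype.ext (hGF x.1),
      fun x => Subtype.ext (hFG x.1 x.2.1.1 x.2.2)⟩,
      hcontF.subtype_mk _,
      ?_⟩, ?_, ?_⟩
  · apply Continuous.subtype_mk
    apply continuous_pi
    intro n
    exact (continuous_apply (n + 1)).comp continuous_subtype_val
  · intro x
    refine ⟨fun n => rfl, fun y hy hx0 => ?_⟩
    show Sum.map α id (x.1 0) = Sum.inl (α y)
    rw [hx0]; rfl
  · intro x n
    rfl
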